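/- Let G be a finite group such that C_G(F(G)) ≤ F(G) and such that [x, F(G)] is a normal subset of F(G) for every small element x of G. Then every small element of G lies in the second center Z_2(F(G)) of the Fitting subgroup F(G); in particular M(G) ≤ Z_2(F(G)). -/

import Mathlib

/-- The size of the conjugacy class of `x` in `G`. -/
noncomputable def classCard {G : Type*} [Group G] (x : G) : ℕ := Nat.card (conjugatesOf x)

/-- An element `x` is *small* if its conjugacy class size is among the two smallest
conjugacy class sizes of `G`, i.e. at most one conjugacy class size is strictly
smaller than that of `x`. -/
def IsSmall {G : Type*} [Group G] (x : G) : Prop :=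
  {n : ℕ | (∃ g : G, classCard g = n) ∧ n < classCard x}.Subsingleton

/-- `M G` is the subgroup generated by all small elements of `G`. -/
def smallGen (G : Type*) [Group G] : Subgroup G := Subgroup.closure {x : G | IsSmall x}

/-- `[x, K] = {x⁻¹k⁻¹xk : k ∈ K}`. -/
def commSet {G : Type*} [Group G] (x : G) (K : Set G) : Set G :=
  {y | ∃ k ∈ K, y = x⁻¹ * k⁻¹ * x * k}

/-- `[A, x] = {a⁻¹x⁻¹ax : a ∈ A}`. -/
def commSet' {G : Type*} [Group G] (A : Set G) (x : G) : Set G :=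
  {y | ∃ a ∈ A, y = a⁻¹ * x⁻¹ * a * x}

/-- `S` is a normal subset of `K`: `k⁻¹Sk = S` for all `k ∈ K`. -/
def IsNormalSubsetOf {G : Type*} [Group G] (S K : Set G) : Prop :=
  ∀ k ∈ K, (fun s => k⁻¹ * s * k) '' S = S

/-- The Fitting subgroup: the join of all nilpotent normal subgroups (for a finite
group, its largest nilpotent normal subgroup). -/
def fittingSubgroup (G : Type*) [Group G] : Subgroup G :=
  ⨆ H ∈ {H : Subgroup G | H.Normal ∧ Group.IsNilpotent ↥H}, H


section Auxiliary

variable {G : Type*} [Group G]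

section Card
variable [Finite G]

lemma classCard_pos (x : G) : 0 < classCard x := by
  have : Nonempty (conjugatesOf x) := ⟨⟨x, mem_conjugatesOf_self⟩⟩
  exact Nat.card_pos

lemma classCard_one : classCard (1 : G) = 1 := by
  have h : conjugatesOf (1 : G) = {1} := by
    ext y
    simp only [conjugatesOf, Set.mem_setOf_eq, Set.mem_singleton_iff, isConj_iff]
    constructor
    · rintro ⟨c, rfl⟩; group
    · rintro rfl; exact ⟨1, by group⟩
  rw [classCard, h, Nat.card_eq_one_iff_unique]
  exact ⟨⟨fun a b => Subtype.ext (by rw [a.2, b.2])⟩, ⟨⟨1, rfl⟩⟩⟩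

lemma mem_center_of_classCard_eq_one {s : G} (h : classCard s = 1) : s ∈ Subgroup.center G := by
  have hs : s ∈ conjugatesOf s := mem_conjugatesOf_self
  rw [classCard, Nat.card_coe_set_eq, Set.ncard_eq_one] at h
  obtain ⟨a, ha⟩ := h
  rw [Subgroup.mem_center_iff]
  intro g
  have hg : g * s * g⁻¹ ∈ conjugatesOf s := isConj_iff.mpr ⟨g, rfl⟩
  rw [ha] at hs hg
  have h2 : g * s * g⁻¹ = s := by rw [hg, ← hs]
  calc g * s = (g * s * g⁻¹) * g := by group
  _ = s * g := by rw [h2]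

lemma classCard_le_of_not_center {x s : G} (hx : IsSmall x) (hs : s ∉ Subgroup.center G) :
    classCard x ≤ classCard s := by
  by_contra h
  push_neg at h
  have h1 : (1 : ℕ) ∈ {n : ℕ | (∃ g : G, classCard g = n) ∧ n < classCard x} :=
    ⟨⟨1, classCard_one⟩, lt_of_le_of_lt (classCard_pos s) h⟩
  have h2 : classCard s ∈ {n : ℕ | (∃ g : G, classCard g = n) ∧ n < classCard x} := ⟨⟨s, rfl⟩, h⟩
  exact hs (mem_center_of_classCard_eq_one (hx h2 h1))

lemma conjugatesOf_eq_orbit (g : G) :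
    conjugatesOf g = MulAction.orbit (ConjAct G) g := by
  ext y
  rw [ConjAct.mem_orbit_conjAct, conjugatesOf, Set.mem_setOf_eq, isConj_comm]

open MulAction in
lemma natCard_orbit_mul_natCard_stabilizer {α β : Type*} [Group α] [MulAction α β] (b : β) :
    Nat.card (orbit α b) * Nat.card (stabilizer α b) = Nat.card α := by
  rw [← Nat.card_prod]
  exact Nat.card_congr (orbitProdStabilizerEquivGroup α b)

lemma classCard_mul_card_centralizer (g : G) :
    classCard g * Nat.card (Subgroup.centralizer ({g} : Set G)) = Nat.card G := by
  haveI : Finite (ConjAct G) := ‹Finite G›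
  have h1 : Nat.card (Subgroup.centralizer ({g} : Set G))
      = Nat.card (MulAction.stabilizer (ConjAct G) g) := by
    rw [Subgroup.centralizer_eq_comap_stabilizer]
    have e2 : ((MulAction.stabilizer (ConjAct G) g).comap
        (ConjAct.toConjAct (G := G)).toMonoidHom) ≃*
        ((MulAction.stabilizer (ConjAct G) g).comap
          (ConjAct.toConjAct (G := G)).toMonoidHom).map
          ((ConjAct.toConjAct (G := G)) : G →* ConjAct G) :=
      MulEquiv.subgroupMap _ _
    have hmap : ((MulAction.stabilizer (ConjAct G) g).comap
        (ConjAct.toConjAct (G := G)).toMonoidHom).map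
          ((ConjAct.toConjAct (G := G)) : G →* ConjAct G)
        = MulAction.stabilizer (ConjAct G) g :=
      Subgroup.map_comap_eq_self_of_surjective (MulEquiv.surjective _) _
    exact (Nat.card_congr e2.toEquiv).trans (congrArg (fun H : Subgroup (ConjAct G) => Nat.card H) hmap)
  have h2 : classCard g = Nat.card (MulAction.orbit (ConjAct G) g) := by
    rw [classCard, conjugatesOf_eq_orbit]
  have h3 : Nat.card G = Nat.card (ConjAct G) := Nat.card_congr ConjAct.toConjAct.toEquiv
  rw [h1, h2, h3]
  exact natCard_orbit_mul_natCard_stabilizer g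

end Card

lemma fitting_normal : (fittingSubgroup G).Normal := by
  constructor
  intro n hn g
  refine Subgroup.iSup_induction
    (C := fun m => g * m * g⁻¹ ∈ fittingSubgroup G)
    (fun H : Subgroup G => ⨆ _ : H ∈ {H : Subgroup G | H.Normal ∧ Group.IsNilpotent ↥H}, H)
    hn ?_ ?_ ?_
  · intro H m hm
    by_cases hH : H ∈ {H : Subgroup G | H.Normal ∧ Group.IsNilpotent ↥H}
    · simp only [iSup_pos hH] at hm
      have : g * m * g⁻¹ ∈ H := hH.1.conj_mem m hm g
      exact le_iSup₂ (f := fun (H : Subgroup G)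
        (_ : H ∈ {H : Subgroup G | H.Normal ∧ Group.IsNilpotent ↥H}) => H) H hH this
    · simp only [iSup_neg hH] at hm
      simp only [Subgroup.mem_bot] at hm
      subst hm
      simpa using (fittingSubgroup G).one_mem
  · simpa using (fittingSubgroup G).one_mem
  · intro a b ha hb
    have : g * (a * b) * g⁻¹ = (g * a * g⁻¹) * (g * b * g⁻¹) := by group
    rw [this]
    exact mul_mem ha hb

lemma nilpotent_normal_le_fitting {N : Subgroup G} (h1 : N.Normal)
    (h2 : Group.IsNilpotent ↥N) : N ≤ fittingSubgroup G :=
  le_iSup₂ (f := fun (H : Subgroup G)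
    (_ : H ∈ {H : Subgroup G | H.Normal ∧ Group.IsNilpotent ↥H}) => H) N ⟨h1, h2⟩

lemma center_swap {z : G} (hz : z ∈ Subgroup.center G) (g : G) : g * z = z * g :=
  Subgroup.mem_center_iff.mp hz g

lemma conj_center {z : G} (hz : z ∈ Subgroup.center G) (g : G) : g * z * g⁻¹ = z := by
  rw [center_swap hz g, mul_assoc, mul_inv_cancel, mul_one]

/-- The subgroup of all `g` with `[g,K] ⊆ Z(G)`. -/
def commCentral (K : Subgroup G) : Subgroup G where
  carrier := {g | ∀ k ∈ K, g⁻¹ * k⁻¹ * g * k ∈ Subgroup.center G}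
  one_mem' := by
    intro k hk
    simpa using (Subgroup.center G).one_mem
  mul_mem' := by
    intro a b ha hb
    intro k hk
    have e : (a*b)⁻¹ * k⁻¹ * (a*b) * k = (b⁻¹ * (a⁻¹*k⁻¹*a*k)) * (k⁻¹*(b*k)) := by group
    rw [e, center_swap (ha k hk) b⁻¹]
    have e2 : (a⁻¹*k⁻¹*a*k * b⁻¹) * (k⁻¹*(b*k)) = (a⁻¹*k⁻¹*a*k) * (b⁻¹*k⁻¹*b*k) := by group
    rw [e2]
    exact mul_mem (ha k hk) (hb k hk)
  inv_mem' := by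
    intro a ha k hk
    have hz : (a⁻¹*k⁻¹*a*k)⁻¹ ∈ Subgroup.center G := inv_mem (ha k hk)
    have e : a⁻¹⁻¹ * k⁻¹ * a⁻¹ * k = a * (a⁻¹*k⁻¹*a*k)⁻¹ * a⁻¹ := by group
    rw [e, center_swap hz a]
    simpa using hz

lemma commCentral_normal (K : Subgroup G) [K.Normal] : (commCentral K).Normal := by
  constructor
  intro a ha g k hk
  have hk' : g⁻¹ * k * g ∈ K := by
    have := Subgroup.Normal.conj_mem ‹K.Normal› k hk g⁻¹
    simpa using this
  have hz := ha (g⁻¹ * k * g) hk'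
  have e : (g*a*g⁻¹)⁻¹ * k⁻¹ * (g*a*g⁻¹) * k
      = g * (a⁻¹ * (g⁻¹*k*g)⁻¹ * a * (g⁻¹*k*g)) * g⁻¹ := by group
  rw [e, center_swap hz g]
  simpa using hz

/-- The commutator in the other orientation. -/
lemma commCentral_comm {K : Subgroup G} {a : G} (ha : a ∈ commCentral K) {k : G} (hk : k ∈ K) :
    a * k * a⁻¹ * k⁻¹ ∈ Subgroup.center G := by
  have hz : (a⁻¹ * (k⁻¹)⁻¹ * a * k⁻¹)⁻¹ ∈ Subgroup.center G := inv_mem (ha k⁻¹ (inv_mem hk))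
  have e : a * k * a⁻¹ * k⁻¹ = a * (a⁻¹ * (k⁻¹)⁻¹ * a * k⁻¹)⁻¹ * a⁻¹ := by group
  rw [e, center_swap hz a]
  simpa using hz

open commutatorElement in
lemma commCentral_commutator_centralizes {K : Subgroup G} [K.Normal] {a b : G}
    (ha : a ∈ commCentral K) (hb : b ∈ commCentral K) :
    ⁅a, b⁆ ∈ Subgroup.centralizer (K : Set G) := by
  have E : ∀ k ∈ K, (a*b)*k*(a*b)⁻¹ = (b*a)*k*(b*a)⁻¹ := by
    intro k hk
    have hza := commCentral_comm ha hk
    have hzb := commCentral_comm hb hk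
    have L : (a*b)*k*(a*b)⁻¹ = ((b*k*b⁻¹*k⁻¹) * (a*k*a⁻¹*k⁻¹)) * k := by
      calc (a*b)*k*(a*b)⁻¹ = (a * (b*k*b⁻¹*k⁻¹) * a⁻¹) * (a * k * a⁻¹) := by group
      _ = (b*k*b⁻¹*k⁻¹) * (a*k*a⁻¹) := by rw [conj_center hzb a]
      _ = ((b*k*b⁻¹*k⁻¹) * (a*k*a⁻¹*k⁻¹)) * k := by group
    have R : (b*a)*k*(b*a)⁻¹ = ((a*k*a⁻¹*k⁻¹) * (b*k*b⁻¹*k⁻¹)) * k := by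
      calc (b*a)*k*(b*a)⁻¹ = (b * (a*k*a⁻¹*k⁻¹) * b⁻¹) * (b * k * b⁻¹) := by group
      _ = (a*k*a⁻¹*k⁻¹) * (b*k*b⁻¹) := by rw [conj_center hza b]
      _ = ((a*k*a⁻¹*k⁻¹) * (b*k*b⁻¹*k⁻¹)) * k := by group
    rw [L, R, center_swap hza (b*k*b⁻¹*k⁻¹)]
  rw [Subgroup.mem_centralizer_iff]
  intro k hk
  have hk2 : (b*a)⁻¹ * k * (b*a) ∈ K := by
    have := Subgroup.Normal.conj_mem ‹K.Normal› k hk (b*a)⁻¹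
    simpa using this
  have hE := E _ hk2
  have e2 : (b*a) * ((b*a)⁻¹ * k * (b*a)) * (b*a)⁻¹ = k := by group
  rw [e2] at hE
  calc k * ⁅a, b⁆ = ((a*b) * ((b*a)⁻¹ * k * (b*a)) * (a*b)⁻¹) * ⁅a,b⁆ := by rw [hE]
  _ = ⁅a, b⁆ * k := by rw [commutatorElement_def]; group

open commutatorElement in
lemma nilpotent_of_le_commCentral {K X : Subgroup G} [K.Normal]
    (hC : Subgroup.centralizer (K : Set G) ≤ K) (hX : X ≤ commCentral K) :
    Group.IsNilpotent ↥X := by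
  have h1 : ⁅X, X⁆ ≤ Subgroup.centralizer (K : Set G) :=
    Subgroup.commutator_le.mpr fun a ha b hb =>
      commCentral_commutator_centralizes (hX ha) (hX hb)
  have h2 : ⁅⁅X, X⁆, X⁆ ≤ Subgroup.center G := by
    refine Subgroup.commutator_le.mpr fun g1 hg1 g2 hg2 => ?_
    have hg1K : g1 ∈ K := hC (h1 hg1)
    have hz : g2 * g1 * g2⁻¹ * g1⁻¹ ∈ Subgroup.center G :=
      commCentral_comm (hX hg2) hg1K
    have e : ⁅g1, g2⁆ = (g2 * g1 * g2⁻¹ * g1⁻¹)⁻¹ := by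
      rw [commutatorElement_def]; group
    rw [e]
    exact inv_mem hz
  have h3 : ⁅⁅⁅X, X⁆, X⁆, X⁆ = ⊥ := by
    refine le_bot_iff.mp (Subgroup.commutator_le.mpr fun g1 hg1 g2 _ => ?_)
    rw [Subgroup.mem_bot, commutatorElement_def]
    have := center_swap (h2 hg1) g2
    rw [← this]
    group
  have m0 : (⊤ : Subgroup ↥X).map X.subtype = X := by
    rw [← MonoidHom.range_eq_map, Subgroup.range_subtype]
  have hstep : ∀ n, (lowerCentralSeries (⊤ : Subgroup ↥X) (n+1)).map X.subtype
      = ⁅(lowerCentralSeries (⊤ : Subgroup ↥X) n).map X.subtype, X⁆ := by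
    intro n
    have e : lowerCentralSeries (⊤ : Subgroup ↥X) (n+1) = ⁅lowerCentralSeries (⊤ : Subgroup ↥X) n, ⊤⁆ := rfl
    rw [e, Subgroup.map_commutator, m0]
  have hl3 : (lowerCentralSeries (⊤ : Subgroup ↥X) 3).map X.subtype = ⊥ := by
    have l1 : (lowerCentralSeries (⊤ : Subgroup ↥X) 1).map X.subtype ≤ ⁅X, X⁆ := by
      rw [hstep 0]
      have e0 : lowerCentralSeries (⊤ : Subgroup ↥X) 0 = ⊤ := rfl
      rw [e0, m0]
    have l2 : (lowerCentralSeries (⊤ : Subgroup ↥X) 2).map X.subtype ≤ ⁅⁅X, X⁆, X⁆ := by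
      rw [hstep 1]
      exact Subgroup.commutator_mono l1 le_rfl
    have l3 : (lowerCentralSeries (⊤ : Subgroup ↥X) 3).map X.subtype ≤ ⁅⁅⁅X, X⁆, X⁆, X⁆ := by
      rw [hstep 2]
      exact Subgroup.commutator_mono l2 le_rfl
    rw [h3] at l3
    exact le_bot_iff.mp l3
  rw [Subgroup.map_eq_bot_iff_of_injective _ (Subgroup.subtype_injective X)] at hl3
  exact nilpotent_iff_lowerCentralSeries.mpr ⟨3, hl3⟩

open Pointwise MulAction in
lemma comm_mem_center [Finite G] {K : Subgroup G} [hKn : K.Normal] {x : G} (hx : IsSmall x)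
    (hns : IsNormalSubsetOf (commSet x (K : Set G)) (K : Set G)) :
    ∀ k ∈ K, x⁻¹ * k⁻¹ * x * k ∈ Subgroup.center G := by
  intro k0 hk0
  by_contra hs
  haveI : Finite (ConjAct G) := ‹Finite G›
  set S : Set G := commSet x (K : Set G) with hSdef
  set s : G := x⁻¹ * k0⁻¹ * x * k0 with hsdef
  have hsS : s ∈ S := ⟨k0, hk0, rfl⟩
  have honeS : (1:G) ∈ S := ⟨1, K.one_mem, by group⟩
  have hSfin : S.Finite := Set.toFinite S
  set C : Subgroup G := Subgroup.centralizer ({x} : Set G) with hCdef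
  -- conjugation stability of S
  have hcxc : ∀ c ∈ C, c * x * c⁻¹ = x := by
    intro c hc
    have hcx : x * c = c * x := Subgroup.mem_centralizer_iff.mp hc x rfl
    rw [← hcx, mul_assoc, mul_inv_cancel, mul_one]
  have hconjC : ∀ c ∈ C, ∀ t ∈ S, c * t * c⁻¹ ∈ S := by
    rintro c hc t ⟨k1, hk1, rfl⟩
    refine ⟨c * k1 * c⁻¹, by simpa using hKn.conj_mem k1 hk1 c, ?_⟩
    have e1 : c * x * c⁻¹ = x := hcxc c hc
    have e2 : c * x⁻¹ * c⁻¹ = x⁻¹ := by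
      calc c * x⁻¹ * c⁻¹ = (c * x * c⁻¹)⁻¹ := by group
      _ = x⁻¹ := by rw [e1]
    have e3 : c * k1⁻¹ * c⁻¹ = (c * k1 * c⁻¹)⁻¹ := by group
    calc c * (x⁻¹ * k1⁻¹ * x * k1) * c⁻¹
        = (c * x⁻¹ * c⁻¹) * (c * k1⁻¹ * c⁻¹) * (c * x * c⁻¹) * (c * k1 * c⁻¹) := by group
    _ = x⁻¹ * (c * k1 * c⁻¹)⁻¹ * x * (c * k1 * c⁻¹) := by rw [e1, e2, e3]
  have hconjK : ∀ k ∈ K, ∀ t ∈ S, k * t * k⁻¹ ∈ S := by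
    intro k hk t ht
    have h := hns k⁻¹ (inv_mem hk)
    rw [← h]
    exact ⟨t, ht, by rw [inv_inv]⟩
  set U : Subgroup G := C ⊔ K with hUdef
  have hU : ∀ u ∈ U, ∀ t ∈ S, u * t * u⁻¹ ∈ S := by
    intro u hu t ht
    have hu' : (u : G) ∈ (C : Set G) * (K : Set G) := by
      rw [← Subgroup.mul_normal]; exact hu
    obtain ⟨c, hc, k, hk, rfl⟩ := hu'
    have e : (c*k) * t * (c*k)⁻¹ = c * (k * t * k⁻¹) * c⁻¹ := by group
    rw [e]
    exact hconjC c hc _ (hconjK k hk t ht)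
  set Uc : Subgroup (ConjAct G) := U.map (ConjAct.toConjAct (G := G)).toMonoidHom with hUcdef
  have smul_eq : ∀ (uhat : ↥Uc) (t : G),
      uhat • t = ConjAct.ofConjAct (uhat : ConjAct G) * t * (ConjAct.ofConjAct (uhat : ConjAct G))⁻¹ :=
    fun uhat t => rfl
  -- orbit of s is inside S
  have horb_s : MulAction.orbit ↥Uc s ⊆ S := by
    rintro y ⟨uhat, rfl⟩
    obtain ⟨u, hu, hu2⟩ := Subgroup.mem_map.mp uhat.2
    have e : uhat • s = u * s * u⁻¹ := by
      rw [smul_eq, ← hu2]; rfl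
    show uhat • s ∈ S
    rw [e]
    exact hU u hu s hsS
  -- orbit of x is x * S
  have horb_x : MulAction.orbit ↥Uc x = (fun t => x * t) '' S := by
    apply Set.Subset.antisymm
    · rintro y ⟨uhat, rfl⟩
      obtain ⟨u, hu, hu2⟩ := Subgroup.mem_map.mp uhat.2
      have e : uhat • x = u * x * u⁻¹ := by
        rw [smul_eq, ← hu2]; rfl
      show uhat • x ∈ (fun t => x * t) '' S
      rw [e]
      have hu' : (u : G) ∈ (C : Set G) * (K : Set G) := by
        rw [← Subgroup.mul_normal]; exact hu
      obtain ⟨c, hc, k, hk, rfl⟩ := hu'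
      have hs' : x⁻¹ * (k⁻¹)⁻¹ * x * k⁻¹ ∈ S := ⟨k⁻¹, inv_mem hk, rfl⟩
      refine ⟨c * (x⁻¹ * (k⁻¹)⁻¹ * x * k⁻¹) * c⁻¹, hconjC c hc _ hs', ?_⟩
      have e1 : c * x * c⁻¹ = x := hcxc c hc
      dsimp only
      symm
      calc (c*k) * x * (c*k)⁻¹ = c * (x * (x⁻¹ * (k⁻¹)⁻¹ * x * k⁻¹)) * c⁻¹ := by group
      _ = (c * x * c⁻¹) * (c * (x⁻¹ * (k⁻¹)⁻¹ * x * k⁻¹) * c⁻¹) := by group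
      _ = x * (c * (x⁻¹ * (k⁻¹)⁻¹ * x * k⁻¹) * c⁻¹) := by rw [e1]
    · rintro y ⟨t, ⟨k1, hk1, rfl⟩, rfl⟩
      refine ⟨⟨ConjAct.toConjAct k1⁻¹,
        Subgroup.mem_map.mpr ⟨k1⁻¹, (Subgroup.mem_sup_right (inv_mem hk1) : k1⁻¹ ∈ U), rfl⟩⟩, ?_⟩
      show (⟨ConjAct.toConjAct k1⁻¹, _⟩ : ↥Uc) • x = _
      rw [smul_eq]
      simp only [ConjAct.ofConjAct_toConjAct]
      group
  -- cardinalities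
  have hcard_x_orbit : (MulAction.orbit ↥Uc x).ncard = S.ncard := by
    rw [horb_x]
    exact Set.ncard_image_of_injective S (mul_right_injective x)
  have hsub_card : (MulAction.orbit ↥Uc s).ncard ≤ S.ncard := Set.ncard_le_ncard horb_s hSfin
  have hos_s := natCard_orbit_mul_natCard_stabilizer (α := ↥Uc) s
  have hos_x := natCard_orbit_mul_natCard_stabilizer (α := ↥Uc) x
  have hstab_s : Nat.card (MulAction.stabilizer ↥Uc s)
      ≤ Nat.card (Subgroup.centralizer ({s} : Set G)) := by
    refine Nat.card_le_card_of_injective (fun p => ⟨ConjAct.ofConjAct ((p : ↥Uc) : ConjAct G), ?_⟩) ?_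
    · have hp := p.2
      rw [MulAction.mem_stabilizer_iff, smul_eq] at hp
      refine Subgroup.mem_centralizer_iff.mpr fun h hh => ?_
      rw [Set.mem_singleton_iff] at hh
      subst hh
      exact (mul_inv_eq_iff_eq_mul.mp hp).symm
    · intro p q h
      have h2 := congrArg Subtype.val h
      exact Subtype.ext (Subtype.ext (ConjAct.ofConjAct.injective h2))
  have hstab_sx : Nat.card (Subgroup.centralizer ({s} : Set G))
      ≤ Nat.card (Subgroup.centralizer ({x} : Set G)) := by
    have hcls : classCard x ≤ classCard s := classCard_le_of_not_center hx hs
    have e1 := classCard_mul_card_centralizer s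
    have e2 := classCard_mul_card_centralizer x
    have h3 : classCard x * Nat.card (Subgroup.centralizer ({s} : Set G))
        ≤ classCard x * Nat.card (Subgroup.centralizer ({x} : Set G)) := by
      calc classCard x * Nat.card (Subgroup.centralizer ({s} : Set G))
          ≤ classCard s * Nat.card (Subgroup.centralizer ({s} : Set G)) :=
            Nat.mul_le_mul_right _ hcls
      _ = classCard x * Nat.card (Subgroup.centralizer ({x} : Set G)) := by rw [e1, e2]
    exact Nat.le_of_mul_le_mul_left h3 (classCard_pos x)
  have hstab_x : Nat.card (Subgroup.centralizer ({x} : Set G))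
      ≤ Nat.card (MulAction.stabilizer ↥Uc x) := by
    refine Nat.card_le_card_of_injective (fun c => ⟨⟨ConjAct.toConjAct (c : G),
      Subgroup.mem_map.mpr ⟨(c : G), (Subgroup.mem_sup_left c.2 : (c:G) ∈ U), rfl⟩⟩, ?_⟩) ?_
    · rw [MulAction.mem_stabilizer_iff]
      show ConjAct.ofConjAct (ConjAct.toConjAct (c:G)) * x
        * (ConjAct.ofConjAct (ConjAct.toConjAct (c:G)))⁻¹ = x
      rw [ConjAct.ofConjAct_toConjAct]
      exact hcxc _ c.2
    · intro p q h
      have h2 := congrArg (fun (r : ↥(MulAction.stabilizer ↥Uc x)) => ((r : ↥Uc) : ConjAct G)) h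
      exact Subtype.ext (ConjAct.toConjAct.injective h2)
  -- combine
  have haS_le_aX : Nat.card (MulAction.stabilizer ↥Uc s) ≤ Nat.card (MulAction.stabilizer ↥Uc x) :=
    le_trans hstab_s (le_trans hstab_sx hstab_x)
  have haX_pos : 0 < Nat.card (MulAction.stabilizer ↥Uc x) := Nat.card_pos
  have hoX_le_oS : Nat.card (MulAction.orbit ↥Uc x) ≤ Nat.card (MulAction.orbit ↥Uc s) := by
    refine Nat.le_of_mul_le_mul_right ?_ haX_pos
    calc Nat.card (MulAction.orbit ↥Uc x) * Nat.card (MulAction.stabilizer ↥Uc x)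
        = Nat.card (MulAction.orbit ↥Uc s) * Nat.card (MulAction.stabilizer ↥Uc s) := by
          rw [hos_s, hos_x]
    _ ≤ Nat.card (MulAction.orbit ↥Uc s) * Nat.card (MulAction.stabilizer ↥Uc x) :=
          Nat.mul_le_mul_left _ haS_le_aX
  rw [Nat.card_coe_set_eq, Nat.card_coe_set_eq, hcard_x_orbit] at hoX_le_oS
  have horbeq : MulAction.orbit ↥Uc s = S :=
    Set.eq_of_subset_of_ncard_le horb_s hoX_le_oS hSfin
  have hone_orb : (1:G) ∈ MulAction.orbit ↥Uc s := by rw [horbeq]; exact honeS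
  obtain ⟨uhat, huhat⟩ := hone_orb
  simp only at huhat
  rw [smul_eq] at huhat
  have hs1 : s = 1 := by
    set u : G := ConjAct.ofConjAct (uhat : ConjAct G)
    calc s = u⁻¹ * (u * s * u⁻¹) * u := by group
    _ = u⁻¹ * 1 * u := by rw [huhat]
    _ = 1 := by group
  exact hs (hs1 ▸ (Subgroup.center G).one_mem)

end Auxiliary

/-- If `C_G(F(G)) ≤ F(G)` and `[x, F(G)]` is a normal subset of `F(G)` for every small
element `x` of the finite group `G`, then every small element of `G` lies in the second
center `Z₂(F(G))`; in particular `M(G) ≤ Z₂(F(G))`. -/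
theorem stmt_4 {G : Type*} [Group G] [Finite G]
    (hC : Subgroup.centralizer (fittingSubgroup G : Set G) ≤ fittingSubgroup G)
    (hns : ∀ x : G, IsSmall x →
      IsNormalSubsetOf (commSet x (fittingSubgroup G : Set G)) (fittingSubgroup G : Set G)) :
    (∀ x : G, IsSmall x → ∃ hx : x ∈ fittingSubgroup G,
      (⟨x, hx⟩ : fittingSubgroup G) ∈ upperCentralSeries ↥(fittingSubgroup G) 2) ∧
    smallGen G ≤ (upperCentralSeries ↥(fittingSubgroup G) 2).map (fittingSubgroup G).subtype := by
  haveI hfn : (fittingSubgroup G).Normal := fitting_normal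
  have main : ∀ x : G, IsSmall x → ∃ hx : x ∈ fittingSubgroup G,
      (⟨x, hx⟩ : fittingSubgroup G) ∈ upperCentralSeries ↥(fittingSubgroup G) 2 := by
    intro x hsm
    have hcc : ∀ k ∈ fittingSubgroup G, x⁻¹ * k⁻¹ * x * k ∈ Subgroup.center G :=
      comm_mem_center hsm (hns x hsm)
    have hxX0 : x ∈ commCentral (fittingSubgroup G) := hcc
    haveI : (commCentral (fittingSubgroup G)).Normal := commCentral_normal _
    have hXle : Subgroup.normalClosure {x} ≤ commCentral (fittingSubgroup G) :=
      Subgroup.normalClosure_le_normal (Set.singleton_subset_iff.mpr hxX0)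
    have hnil : Group.IsNilpotent ↥(Subgroup.normalClosure ({x} : Set G)) :=
      nilpotent_of_le_commCentral hC hXle
    have hxK : x ∈ fittingSubgroup G :=
      nilpotent_normal_le_fitting Subgroup.normalClosure_normal hnil
        (Subgroup.subset_normalClosure (Set.mem_singleton x))
    refine ⟨hxK, ?_⟩
    rw [show upperCentralSeries ↥(fittingSubgroup G) 2 = Subgroup.upperCentralSeries ↥(fittingSubgroup G) (1 + 1) from rfl, mem_upperCentralSeries_succ_iff]
    intro y
    rw [upperCentralSeries_one]
    rw [Subgroup.mem_center_iff]
    intro g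
    have hz : x * (y:G) * x⁻¹ * (y:G)⁻¹ ∈ Subgroup.center G := commCentral_comm hxX0 y.2
    exact Subtype.ext (center_swap hz (g : G))
  refine ⟨main, ?_⟩
  rw [smallGen, Subgroup.closure_le]
  intro x hxsm
  obtain ⟨hx, h2⟩ := main x hxsm
  exact ⟨⟨x, hx⟩, h2, rfl⟩
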